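/- Let c > −1. For u in the domain of the Neumann Bessel operator B^n on L²((0,∞), y^c dy), one has lim_{y→0} y^c u'(y) = 0. -/

import Mathlib

open MeasureTheory Set Filter Topology
open scoped ENNReal

/-- The weighted measure `y^c dy` on `(0, ∞)`. -/
noncomputable def weightedHalfLine (c : ℝ) : Measure ℝ :=
  ((volume : Measure ℝ).restrict (Set.Ioi 0)).withDensity fun y => ENNReal.ofReal (y ^ c)

lemma integrable_weighted_iff {c : ℝ} {f : ℝ → ℝ} :
    Integrable f (weightedHalfLine c) ↔
      IntegrableOn (fun y => f y * y ^ c) (Set.Ioi 0) volume := by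
  rw [weightedHalfLine, integrable_withDensity_iff
    (by measurability) (ae_of_all _ fun x => ENNReal.ofReal_lt_top)]
  refine integrable_congr ?_
  filter_upwards [ae_restrict_mem measurableSet_Ioi] with x hx
  rw [ENNReal.toReal_ofReal (Real.rpow_nonneg (le_of_lt hx) c)]

lemma mul_mem_L1 {c : ℝ} {f g : ℝ → ℝ} (hf : MemLp f 2 (weightedHalfLine c))
    (hg : MemLp g 2 (weightedHalfLine c)) :
    Integrable (fun y => f y * g y) (weightedHalfLine c) := by
  haveI : ENNReal.HolderTriple 2 2 1 := ⟨by rw [inv_one]; exact ENNReal.inv_two_add_inv_two⟩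
  have h := hg.smul (r := 1) hf
  rw [← memLp_one_iff_integrable]
  exact h

lemma hasDerivAt_testv (y : ℝ) :
    HasDerivAt (fun y : ℝ => Real.exp (-y ^ 2)) (-(2 * y) * Real.exp (-y ^ 2)) y := by
  have h1 : HasDerivAt (fun y : ℝ => -y ^ 2) (-(2 * y)) y := by
    simpa using (hasDerivAt_pow 2 y).fun_neg
  simpa [mul_comm] using h1.exp

lemma deriv_testv : deriv (fun y : ℝ => Real.exp (-y ^ 2)) =
    fun y => -(2 * y) * Real.exp (-y ^ 2) := by
  funext y; exact (hasDerivAt_testv y).deriv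

lemma memv {c : ℝ} (hc : -1 < c) :
    MemLp (fun y : ℝ => Real.exp (-y ^ 2)) 2 (weightedHalfLine c) := by
  rw [memLp_two_iff_integrable_sq (Continuous.aestronglyMeasurable (by continuity)),
    integrable_weighted_iff]
  refine (integrableOn_rpow_mul_exp_neg_mul_sq two_pos hc).congr_fun ?_ measurableSet_Ioi
  intro x hx
  have h1 : Real.exp (-x ^ 2) ^ 2 = Real.exp (-2 * x ^ 2) := by
    rw [← Real.exp_nat_mul]; norm_num
  show x ^ c * Real.exp (-2 * x ^ 2) = Real.exp (-x ^ 2) ^ 2 * x ^ c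
  rw [h1, mul_comm]

lemma memv' {c : ℝ} (hc : -1 < c) :
    MemLp (deriv (fun y : ℝ => Real.exp (-y ^ 2))) 2 (weightedHalfLine c) := by
  rw [deriv_testv, memLp_two_iff_integrable_sq (Continuous.aestronglyMeasurable (by continuity)),
    integrable_weighted_iff]
  have hc2 : (-1 : ℝ) < c + 2 := by linarith
  have hbig : IntegrableOn (fun x : ℝ => 4 * (x ^ (c + 2) * Real.exp (-2 * x ^ 2)))
      (Ioi 0) volume :=
    (integrableOn_rpow_mul_exp_neg_mul_sq two_pos hc2).const_mul 4
  refine hbig.congr_fun ?_ measurableSet_Ioi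
  intro x hx
  have hx0 : (0 : ℝ) < x := hx
  have h2 : x ^ (c + 2) = x ^ c * x ^ 2 := by
    rw [Real.rpow_add hx0]
    congr 1
    rw [show ((2:ℝ)) = ((2:ℕ):ℝ) by norm_num, Real.rpow_natCast]
  have h1 : Real.exp (-x ^ 2) ^ 2 = Real.exp (-2 * x ^ 2) := by
    rw [← Real.exp_nat_mul]; norm_num
  show 4 * (x ^ (c + 2) * Real.exp (-2 * x ^ 2))
      = (-(2 * x) * Real.exp (-x ^ 2)) ^ 2 * x ^ c
  rw [h2, mul_pow, h1]
  ring

/-- Let `c > -1`. If `u` belongs to the domain of the Neumann Bessel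
operator `B^n` on `L²((0,∞), y^c dy)` — i.e. `u ∈ H¹_c`, `u ∈ H²_loc(0,∞)`,
`B u = u'' + (c/y) u' ∈ L²(y^c dy)`, and the weak formulation
`∫₀^∞ u' v' y^c dy = -∫₀^∞ (Bu) v y^c dy` holds for all `v ∈ H¹_c` — then
`lim_{y→0⁺} y^c u'(y) = 0`. -/
theorem neumann_bessel_boundary_limit (c : ℝ) (hc : -1 < c) (u : ℝ → ℝ)
    (hd1 : ∀ y ∈ Set.Ioi (0:ℝ), DifferentiableAt ℝ u y)
    (hd2 : ∀ y ∈ Set.Ioi (0:ℝ), DifferentiableAt ℝ (deriv u) y)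
    (hu : MemLp u 2 (weightedHalfLine c))
    (hu' : MemLp (deriv u) 2 (weightedHalfLine c))
    (hBu : MemLp (fun y => deriv (deriv u) y + (c / y) * deriv u y) 2 (weightedHalfLine c))
    (hweak : ∀ v : ℝ → ℝ, (∀ y ∈ Set.Ioi (0:ℝ), DifferentiableAt ℝ v y) →
      MemLp v 2 (weightedHalfLine c) → MemLp (deriv v) 2 (weightedHalfLine c) →
      ∫ y in Set.Ioi (0:ℝ), deriv u y * deriv v y * y ^ c =
        - ∫ y in Set.Ioi (0:ℝ), (deriv (deriv u) y + (c / y) * deriv u y) * v y * y ^ c) :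
    Tendsto (fun y => y ^ c * deriv u y) (𝓝[>] (0:ℝ)) (𝓝 0) := by
  have hv2 : MemLp (fun y : ℝ => Real.exp (-y ^ 2)) 2 (weightedHalfLine c) := memv hc
  have hv'2 : MemLp (deriv (fun y : ℝ => Real.exp (-y ^ 2))) 2 (weightedHalfLine c) := memv' hc
  -- G = y^c u'(y) e^{-y^2},  w = (G)' on (0,∞)
  set G : ℝ → ℝ := fun y => y ^ c * deriv u y * Real.exp (-y ^ 2) with hGdef
  set w : ℝ → ℝ := fun y =>
    (deriv (deriv u) y + c / y * deriv u y) * Real.exp (-y ^ 2) * y ^ c +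
      deriv u y * (-(2 * y) * Real.exp (-y ^ 2)) * y ^ c with hwdef
  -- derivative of G on (0,∞)
  have hG' : ∀ y ∈ Ioi (0:ℝ), HasDerivAt G (w y) y := by
    intro y hy
    have hy0 : (0:ℝ) < y := hy
    have h1 : HasDerivAt (fun t : ℝ => t ^ c) (c * y ^ (c - 1)) y :=
      Real.hasDerivAt_rpow_const (Or.inl hy0.ne')
    have h2 : HasDerivAt (deriv u) (deriv (deriv u) y) y := (hd2 y hy).hasDerivAt
    have h3 := (h1.mul h2).mul (hasDerivAt_testv y)
    refine h3.congr_deriv ?_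
    have hpow : y ^ (c - 1) = y ^ c / y := by
      rw [Real.rpow_sub hy0, Real.rpow_one]
    simp only [hwdef, Pi.mul_apply]
    rw [hpow]
    field_simp
    ring
  -- integrability of w on (0,∞)
  have hw1 : IntegrableOn
      (fun y => (deriv (deriv u) y + c / y * deriv u y) * Real.exp (-y ^ 2) * y ^ c)
      (Ioi 0) volume := integrable_weighted_iff.mp (mul_mem_L1 hBu hv2)
  have hw2 : IntegrableOn
      (fun y => deriv u y * deriv (fun y : ℝ => Real.exp (-y ^ 2)) y * y ^ c)
      (Ioi 0) volume := integrable_weighted_iff.mp (mul_mem_L1 hu' hv'2)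
  have hw2' : IntegrableOn
      (fun y => deriv u y * (-(2 * y) * Real.exp (-y ^ 2)) * y ^ c)
      (Ioi 0) volume := by
    rw [deriv_testv] at hw2; exact hw2
  have hw : IntegrableOn w (Ioi 0) volume := hw1.add hw2'
  -- total integral of w vanishes (weak formulation)
  have hint0 : ∫ y in Ioi (0:ℝ), w y = 0 := by
    have h0 := hweak (fun y : ℝ => Real.exp (-y ^ 2))
      (fun y _ => (hasDerivAt_testv y).differentiableAt) hv2 hv'2
    rw [deriv_testv] at h0
    simp only [hwdef]
    rw [integral_add hw1 hw2', h0]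
    ring
  -- FTC on compact subintervals
  have hFTC : ∀ a b : ℝ, 0 < a → a ≤ b → ∫ t in a..b, w t = G b - G a := by
    intro a b ha hab
    refine intervalIntegral.integral_eq_sub_of_hasDerivAt (fun t ht => ?_) ?_
    · rw [uIcc_of_le hab] at ht
      exact hG' t (lt_of_lt_of_le ha ht.1)
    · rw [intervalIntegrable_iff_integrableOn_Ioc_of_le hab]
      exact hw.mono_set fun t ht => lt_of_lt_of_le ha (le_of_lt ht.1)
  -- the primitive F and its continuity at 0
  set F : ℝ → ℝ := fun x => ∫ t in Ioc (0:ℝ) x, w t with hFdef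
  have hF0 : Tendsto F (𝓝[>] (0:ℝ)) (𝓝 0) := by
    have hicc : IntegrableOn w (Icc (0:ℝ) 1) volume :=
      (integrableOn_Icc_iff_integrableOn_Ioc (f := w) (a := 0) (b := 1)).mpr (hw.mono_set Ioc_subset_Ioi_self)
    have hFc := intervalIntegral.continuousOn_primitive hicc 0 ⟨le_rfl, zero_le_one⟩
    have hF00 : F 0 = 0 := by simp [hFdef]
    have h2 : Tendsto F (𝓝[Icc (0:ℝ) 1] 0) (𝓝 (F 0)) := hFc
    rw [hF00] at h2
    rw [← nhdsWithin_Ioc_eq_nhdsGT (zero_lt_one (α := ℝ))]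
    exact h2.mono_left (nhdsWithin_mono _ Ioc_subset_Icc_self)
  -- representation of G near 0
  have hrep : ∀ y ∈ Ioc (0:ℝ) 1, G y = G 1 - (∫ t in Ioc (0:ℝ) 1, w t) + F y := by
    intro y hy
    have h1 := hFTC y 1 hy.1 hy.2
    rw [intervalIntegral.integral_of_le hy.2] at h1
    have hsplit : ∫ t in Ioc (0:ℝ) 1, w t = F y + ∫ t in Ioc y 1, w t := by
      rw [hFdef]
      rw [← setIntegral_union (Ioc_disjoint_Ioc_of_le le_rfl) measurableSet_Ioc
        (hw.mono_set fun t ht => ht.1)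
        (hw.mono_set fun t ht => lt_of_lt_of_le hy.1 (le_of_lt ht.1)),
        Ioc_union_Ioc_eq_Ioc (le_of_lt hy.1) hy.2]
    have := hsplit
    linarith [h1, hsplit]
  -- limit of G at 0+
  have hlim0 : Tendsto G (𝓝[>] (0:ℝ))
      (𝓝 (G 1 - (∫ t in Ioc (0:ℝ) 1, w t))) := by
    have h1 : Tendsto (fun y => G 1 - (∫ t in Ioc (0:ℝ) 1, w t) + F y) (𝓝[>] (0:ℝ))
        (𝓝 (G 1 - (∫ t in Ioc (0:ℝ) 1, w t) + 0)) := hF0.const_add _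
    rw [add_zero] at h1
    refine Tendsto.congr' ?_ h1
    filter_upwards [Ioc_mem_nhdsGT_of_mem (⟨le_rfl, zero_lt_one⟩ : (0:ℝ) ∈ Ico 0 1)] with y hy
    exact (hrep y hy).symm
  -- limit of G at infinity
  have hIoi1 : IntegrableOn w (Ioi (1:ℝ)) volume :=
    hw.mono_set (Ioi_subset_Ioi zero_le_one)
  have htail : Tendsto (fun R => ∫ t in (1:ℝ)..R, w t) atTop
      (𝓝 (∫ t in Ioi (1:ℝ), w t)) :=
    intervalIntegral_tendsto_integral_Ioi 1 hIoi1 tendsto_id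
  have hlimtop : Tendsto G atTop (𝓝 (G 1 + ∫ t in Ioi (1:ℝ), w t)) := by
    have h1 : Tendsto (fun R => G 1 + ∫ t in (1:ℝ)..R, w t) atTop
        (𝓝 (G 1 + ∫ t in Ioi (1:ℝ), w t)) := htail.const_add _
    refine Tendsto.congr' ?_ h1
    filter_upwards [eventually_ge_atTop (1:ℝ)] with R hR
    have := hFTC 1 R zero_lt_one hR
    linarith
  -- G is integrable on (0,∞), so its limit at infinity is 0
  have hGint : IntegrableOn G (Ioi 0) volume := by
    have h1 : IntegrableOn (fun y => deriv u y * Real.exp (-y ^ 2) * y ^ c)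
        (Ioi 0) volume := integrable_weighted_iff.mp (mul_mem_L1 hu' hv2)
    refine h1.congr_fun (fun x _ => ?_) measurableSet_Ioi
    show deriv u x * Real.exp (-x ^ 2) * x ^ c = G x
    simp only [hGdef]; ring
  have hM0 : G 1 + (∫ t in Ioi (1:ℝ), w t) = 0 := by
    set M := G 1 + ∫ t in Ioi (1:ℝ), w t with hMdef
    by_contra hM
    have hMpos : 0 < |M| := abs_pos.mpr hM
    have hev : ∀ᶠ R in atTop, |M| / 2 ≤ |G R| ∧ (0:ℝ) ≤ R := by
      refine (hlimtop.eventually (eventually_abs_sub_lt M (half_pos hMpos))).and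
        (eventually_ge_atTop 0) |>.mono ?_
      rintro R ⟨h1, h2⟩
      refine ⟨?_, h2⟩
      have := abs_sub_abs_le_abs_sub M (G R)
      rw [abs_sub_comm] at h1
      linarith
    obtain ⟨a, ha⟩ := eventually_atTop.mp hev
    have ha0 : (0:ℝ) ≤ a := (ha a le_rfl).2
    have hconst : IntegrableOn (fun _ : ℝ => |M| / 2) (Ioi a) volume := by
      have hGn : IntegrableOn (fun y => ‖G y‖) (Ioi 0) volume := hGint.norm
      refine Integrable.mono' (hGn.mono_set (Ioi_subset_Ioi ha0))
        aestronglyMeasurable_const ?_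
      filter_upwards [ae_restrict_mem measurableSet_Ioi] with x hx
      have hxa : a ≤ x := le_of_lt hx
      have := (ha x hxa).1
      rw [Real.norm_eq_abs, abs_of_nonneg (by positivity)]
      exact this.trans_eq (Real.norm_eq_abs (G x)).symm |>.trans le_rfl
    rw [integrableOn_const_iff, enorm_eq_zero] at hconst
    rcases hconst with h | h
    · have : |M| = 0 := by linarith
      exact hM (abs_eq_zero.mp this)
    · rw [Real.volume_Ioi] at h
      exact (lt_irrefl _ h).elim
  -- the two limits agree since the total integral vanishes
  have hsplit2 : (∫ t in Ioc (0:ℝ) 1, w t) + ∫ t in Ioi (1:ℝ), w t = 0 := by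
    rw [← setIntegral_union (Ioc_disjoint_Ioi le_rfl) measurableSet_Ioi
      (hw.mono_set Ioc_subset_Ioi_self) hIoi1, Ioc_union_Ioi_eq_Ioi zero_le_one]
    exact hint0
  have hL0 : G 1 - (∫ t in Ioc (0:ℝ) 1, w t) = 0 := by linarith
  rw [hL0] at hlim0
  -- divide by e^{-y^2} which tends to 1
  have hvlim : Tendsto (fun y : ℝ => Real.exp (-y ^ 2)) (𝓝[>] (0:ℝ)) (𝓝 1) := by
    have hcont : Continuous (fun y : ℝ => Real.exp (-y ^ 2)) :=
      Real.continuous_exp.comp (continuous_pow 2).neg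
    have := (hcont.tendsto 0).mono_left (nhdsWithin_le_nhds (s := Ioi (0:ℝ)))
    simpa using this
  have hdiv := hlim0.div hvlim one_ne_zero
  rw [zero_div] at hdiv
  refine hdiv.congr fun y => ?_
  simp only [hGdef, Pi.div_apply]
  rw [mul_div_assoc, div_self (Real.exp_ne_zero _), mul_one]
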